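/- Let (F_n)_{n≥0} be a filtration, (M_n)_{n≥1} an R^D-valued martingale difference sequence (M_n is F_n-measurable, E‖M_n‖_*² < ∞, E[M_n | F_{n−1}] = 0 a.s.), (X_n)_{n≥0} an adapted sequence with values in a compact set X ⊂ R^D, x ∈ X fixed, and γ_n > 0 with Σ_{k=0}^∞ γ_k = ∞ and Σ_{k=0}^∞ γ_k² E‖M_{k+1}‖_*² / ( Σ_{i=0}^k γ_i )² < ∞. Then S_n(x) / ( Σ_{k=0}^{n−1} γ_k ) → 0 almost surely as n → ∞, where S_n(x) = Σ_{k=0}^{n−1} γ_k ⟨X_k − x, M_{k+1}⟩. -/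

import Mathlib

open scoped BigOperators

noncomputable section

/-- The standard duality pairing on `ℝ^D`. -/
def stdPair {D : ℕ} (x y : Fin D → ℝ) : ℝ := ∑ j, x j * y j

/-- A norm on `ℝ^D`, given as explicit data. -/
structure NormOn (D : ℕ) where
  toFun : (Fin D → ℝ) → ℝ
  add_le' : ∀ x y, toFun (x + y) ≤ toFun x + toFun y
  smul' : ∀ (c : ℝ) (x : Fin D → ℝ), toFun (c • x) = |c| * toFun x
  eq_zero' : ∀ x, toFun x = 0 → x = 0

instance {D : ℕ} : CoeFun (NormOn D) (fun _ => (Fin D → ℝ) → ℝ) := ⟨NormOn.toFun⟩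

/-- The dual norm `‖y‖_* = sup_{‖x‖ ≤ 1} ⟨x, y⟩` of a norm on `ℝ^D`. -/
def dualNorm {D : ℕ} (nrm : NormOn D) (y : Fin D → ℝ) : ℝ :=
  sSup ((fun x => stdPair x y) '' {x | nrm x ≤ 1})


open MeasureTheory Filter
open scoped ENNReal NNReal

namespace NormOnAux

variable {D : ℕ} (nrm : NormOn D)

lemma nrm_zero : nrm 0 = 0 := by
  have h := nrm.smul' 0 0
  simpa using h

lemma nrm_neg (v : Fin D → ℝ) : nrm (-v) = nrm v := by
  have h := nrm.smul' (-1) v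
  simpa using h

lemma nrm_nonneg (v : Fin D → ℝ) : 0 ≤ nrm v := by
  have h := nrm.add_le' v (-v)
  rw [add_neg_cancel, nrm_zero, nrm_neg] at h
  linarith

lemma nrm_sub_le (u v : Fin D → ℝ) : nrm u ≤ nrm (u - v) + nrm v := by
  have h := nrm.add_le' (u - v) v
  simpa using h

lemma exists_upper : ∃ K : ℝ, 0 < K ∧ ∀ v, nrm v ≤ K * ‖v‖ := by
  have hsumnn : 0 ≤ ∑ j, nrm (Pi.single j 1) :=
    Finset.sum_nonneg fun j _ => nrm_nonneg nrm _
  refine ⟨(∑ j, nrm (Pi.single j 1)) + 1, by linarith, fun v => ?_⟩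
  have hv : v = ∑ j, Pi.single j (v j) := by
    simp [Finset.univ_sum_single]
  have h1 : nrm v ≤ ∑ j, nrm (Pi.single j (v j)) := by
    calc nrm v = nrm (∑ j, Pi.single j (v j)) := by rw [← hv]
    _ ≤ ∑ j, nrm (Pi.single j (v j)) :=
      Finset.le_sum_of_subadditive nrm.toFun (nrm_zero nrm).le nrm.add_le' _ _
  have h2 : ∀ j, nrm (Pi.single j (v j)) ≤ nrm (Pi.single j 1) * ‖v‖ := by
    intro j
    have : Pi.single j (v j) = (v j) • (Pi.single j (1:ℝ) : Fin D → ℝ) := by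
      ext i
      by_cases h : i = j <;> simp [Pi.single_apply, h, mul_comm]
    rw [this, nrm.smul']
    have := norm_le_pi_norm v j
    have hn := nrm_nonneg nrm (Pi.single j (1:ℝ))
    calc |v j| * nrm (Pi.single j 1) ≤ ‖v‖ * nrm (Pi.single j 1) := by
          apply mul_le_mul_of_nonneg_right _ hn
          simpa [Real.norm_eq_abs] using norm_le_pi_norm v j
      _ = nrm (Pi.single j 1) * ‖v‖ := mul_comm _ _
  calc nrm v ≤ ∑ j, nrm (Pi.single j (v j)) := h1
    _ ≤ ∑ j, nrm (Pi.single j 1) * ‖v‖ := Finset.sum_le_sum fun j _ => h2 j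
    _ = (∑ j, nrm (Pi.single j 1)) * ‖v‖ := by rw [← Finset.sum_mul]
    _ ≤ ((∑ j, nrm (Pi.single j 1)) + 1) * ‖v‖ := by
        apply mul_le_mul_of_nonneg_right _ (norm_nonneg v); linarith

lemma continuous_nrm : Continuous nrm.toFun := by
  obtain ⟨K, hK, hKle⟩ := exists_upper nrm
  apply Metric.continuous_iff.2
  intro u ε hε
  refine ⟨ε / K, by positivity, fun v hv => ?_⟩
  have h1 : nrm v ≤ nrm (v - u) + nrm u := nrm_sub_le nrm v u
  have h2 : nrm u ≤ nrm (u - v) + nrm v := nrm_sub_le nrm u v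
  have h3 : nrm (v - u) ≤ K * ‖v - u‖ := hKle _
  have h4 : nrm (u - v) ≤ K * ‖u - v‖ := hKle _
  have hd : ‖v - u‖ < ε / K := by rwa [dist_eq_norm] at hv
  have hd' : ‖u - v‖ < ε / K := by rwa [norm_sub_rev]
  have hKε : K * (ε / K) = ε := by field_simp
  have e3 : K * ‖v - u‖ < ε := by
    have := mul_lt_mul_of_pos_left hd hK; linarith
  have e4 : K * ‖u - v‖ < ε := by
    have := mul_lt_mul_of_pos_left hd' hK; linarith
  rw [Real.dist_eq, abs_sub_lt_iff]
  constructor <;> linarith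

lemma exists_lower : ∃ m : ℝ, 0 < m ∧ ∀ v, m * ‖v‖ ≤ nrm v := by
  rcases Nat.eq_zero_or_pos D with hD | hD
  · refine ⟨1, one_pos, fun v => ?_⟩
    subst hD
    have hv0 : v = 0 := funext fun i => i.elim0
    rw [hv0, nrm_zero]
    simp
  · haveI : Nonempty (Fin D) := Fin.pos_iff_nonempty.mp hD
    have hsne : (Metric.sphere (0 : Fin D → ℝ) 1).Nonempty :=
      NormedSpace.sphere_nonempty.mpr zero_le_one
    obtain ⟨v0, hv0, hmin⟩ := (isCompact_sphere (0 : Fin D → ℝ) 1).exists_isMinOn hsne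
      (continuous_nrm nrm).continuousOn
    have hv0norm : ‖v0‖ = 1 := by simpa using hv0
    have hv0ne : v0 ≠ 0 := by
      intro h
      rw [h] at hv0norm; simp at hv0norm
    have hm : 0 < nrm v0 := by
      rcases lt_or_eq_of_le (nrm_nonneg nrm v0) with h | h
      · exact h
      · exact absurd (nrm.eq_zero' v0 h.symm) hv0ne
    refine ⟨nrm v0, hm, fun v => ?_⟩
    rcases eq_or_ne v 0 with rfl | hv
    · simp [nrm_zero, le_of_eq]
    · have hvn : 0 < ‖v‖ := norm_pos_iff.mpr hv
      have hw : (‖v‖⁻¹ • v) ∈ Metric.sphere (0 : Fin D → ℝ) 1 := by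
        simp [norm_smul, abs_of_pos (inv_pos.mpr hvn), inv_mul_cancel₀ hvn.ne']
      have h1 : nrm v0 ≤ nrm (‖v‖⁻¹ • v) := hmin hw
      rw [nrm.smul', abs_of_pos (inv_pos.mpr hvn)] at h1
      calc nrm v0 * ‖v‖ ≤ (‖v‖⁻¹ * nrm v) * ‖v‖ :=
            mul_le_mul_of_nonneg_right h1 (norm_nonneg v)
        _ = nrm v := by field_simp

end NormOnAux

namespace NormOnAux

variable {D : ℕ} (nrm : NormOn D)

lemma stdPair_zero_left (y : Fin D → ℝ) : stdPair 0 y = 0 := by simp [stdPair]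

lemma abs_stdPair_le_norm (u y : Fin D → ℝ) : |stdPair u y| ≤ ‖u‖ * ∑ j, |y j| := by
  calc |stdPair u y| ≤ ∑ j, |u j * y j| := Finset.abs_sum_le_sum_abs _ _
    _ ≤ ∑ j, ‖u‖ * |y j| := by
        refine Finset.sum_le_sum fun j _ => ?_
        rw [abs_mul]
        apply mul_le_mul_of_nonneg_right _ (abs_nonneg _)
        simpa [Real.norm_eq_abs] using norm_le_pi_norm u j
    _ = ‖u‖ * ∑ j, |y j| := by rw [Finset.mul_sum]

lemma dual_bddAbove (y : Fin D → ℝ) :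
    BddAbove ((fun x => stdPair x y) '' {x | nrm x ≤ 1}) := by
  obtain ⟨m, hm, hml⟩ := exists_lower nrm
  refine ⟨(1/m) * ∑ j, |y j|, ?_⟩
  rintro r ⟨u, hu, rfl⟩
  have hu1 : ‖u‖ ≤ 1/m := by
    have := hml u
    rw [le_div_iff₀ hm, mul_comm]
    exact le_trans this hu
  calc stdPair u y ≤ |stdPair u y| := le_abs_self _
    _ ≤ ‖u‖ * ∑ j, |y j| := abs_stdPair_le_norm u y
    _ ≤ (1/m) * ∑ j, |y j| := by
        apply mul_le_mul_of_nonneg_right hu1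
        exact Finset.sum_nonneg fun j _ => abs_nonneg _

lemma dualNorm_nonneg (y : Fin D → ℝ) : 0 ≤ dualNorm nrm y := by
  apply le_csSup (dual_bddAbove nrm y)
  exact ⟨0, by simp [Set.mem_setOf_eq, nrm_zero nrm], stdPair_zero_left y⟩

lemma stdPair_le_dual (u y : Fin D → ℝ) : stdPair u y ≤ nrm u * dualNorm nrm y := by
  rcases eq_or_lt_of_le (nrm_nonneg nrm u) with h | h
  · have hu0 : u = 0 := nrm.eq_zero' u h.symm
    rw [hu0, stdPair_zero_left, nrm_zero nrm, zero_mul]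
  · have hw : nrm ((nrm u)⁻¹ • u) ≤ 1 := by
      rw [nrm.smul', abs_of_pos (inv_pos.mpr h), inv_mul_cancel₀ h.ne']
    have hmem : stdPair ((nrm u)⁻¹ • u) y ∈ (fun x => stdPair x y) '' {x | nrm x ≤ 1} :=
      ⟨_, hw, rfl⟩
    have hle : stdPair ((nrm u)⁻¹ • u) y ≤ dualNorm nrm y :=
      le_csSup (dual_bddAbove nrm y) hmem
    have heq : stdPair ((nrm u)⁻¹ • u) y = (nrm u)⁻¹ * stdPair u y := by
      simp [stdPair, Finset.mul_sum, mul_assoc]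
    rw [heq] at hle
    calc stdPair u y = nrm u * ((nrm u)⁻¹ * stdPair u y) := by field_simp
      _ ≤ nrm u * dualNorm nrm y := mul_le_mul_of_nonneg_left hle h.le

lemma abs_stdPair_le_dual (u y : Fin D → ℝ) : |stdPair u y| ≤ nrm u * dualNorm nrm y := by
  rw [abs_le]
  constructor
  · have h := stdPair_le_dual nrm (-u) y
    rw [nrm_neg] at h
    have hneg : stdPair (-u) y = -stdPair u y := by
      simp [stdPair]
    rw [hneg] at h
    linarith
  · exact stdPair_le_dual nrm u y

lemma exists_dual_lower : ∃ c : ℝ, 0 < c ∧ ∀ y, ‖y‖ ≤ c * dualNorm nrm y := by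
  obtain ⟨K, hK, hKle⟩ := exists_upper nrm
  refine ⟨K, hK, fun y => ?_⟩
  have hnn : 0 ≤ K * dualNorm nrm y := mul_nonneg hK.le (dualNorm_nonneg nrm y)
  rw [pi_norm_le_iff_of_nonneg hnn]
  intro j
  have h1 : stdPair (Pi.single j (1:ℝ)) y = y j := by
    simp [stdPair, Pi.single_apply, Finset.sum_ite_eq']
  have h2 : |y j| ≤ nrm (Pi.single j (1:ℝ)) * dualNorm nrm y := by
    rw [← h1]; exact abs_stdPair_le_dual nrm _ y
  have h3 : nrm (Pi.single j (1:ℝ)) ≤ K := by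
    have h4 : ‖(Pi.single j (1:ℝ) : Fin D → ℝ)‖ ≤ 1 := by
      rw [pi_norm_le_iff_of_nonneg zero_le_one]
      intro i
      by_cases hij : i = j <;> simp [Pi.single_apply, hij]
    calc nrm (Pi.single j (1:ℝ)) ≤ K * ‖(Pi.single j (1:ℝ) : Fin D → ℝ)‖ := hKle _
      _ ≤ K * 1 := mul_le_mul_of_nonneg_left h4 hK.le
      _ = K := mul_one K
  calc ‖y j‖ = |y j| := rfl
    _ ≤ nrm (Pi.single j (1:ℝ)) * dualNorm nrm y := h2
    _ ≤ K * dualNorm nrm y :=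
        mul_le_mul_of_nonneg_right h3 (dualNorm_nonneg nrm y)

end NormOnAux

open Filter in
lemma kronecker_aux {γ z : ℕ → ℝ} (hγ : ∀ n, 0 < γ n)
    (hdiv : Tendsto (fun n => ∑ k ∈ Finset.range n, γ k) atTop atTop)
    {L : ℝ}
    (hconv : Tendsto (fun n => ∑ k ∈ Finset.range n,
        γ k * z k / (∑ i ∈ Finset.range (k + 1), γ i)) atTop (nhds L)) :
    Tendsto (fun n => (∑ k ∈ Finset.range n, γ k * z k) /
      ∑ k ∈ Finset.range n, γ k) atTop (nhds 0) := by
  set b : ℕ → ℝ := fun n => ∑ k ∈ Finset.range n, γ k with hb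
  set u : ℕ → ℝ := fun k => γ k * z k / b (k + 1) with hu
  set s : ℕ → ℝ := fun n => ∑ k ∈ Finset.range n, u k with hs
  have hbpos : ∀ n, 0 < b (n + 1) := fun n =>
    Finset.sum_pos (fun i _ => hγ i) Finset.nonempty_range_add_one
  have hsL : Tendsto s atTop (nhds L) := hconv
  have habel : ∀ n, ∑ k ∈ Finset.range n, γ k * z k
      = b n * s n - ∑ k ∈ Finset.range n, γ k * s k := by
    intro n
    induction n with
    | zero => simp [hb, hs]
    | succ n ih =>
      have h1 : s (n + 1) = s n + u n := Finset.sum_range_succ u n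
      have h2 : b (n + 1) = b n + γ n := Finset.sum_range_succ γ n
      have h3 : γ n * z n = b (n + 1) * u n := by
        rw [hu, mul_comm (b (n + 1)), div_mul_cancel₀ _ (hbpos n).ne']
      rw [Finset.sum_range_succ, ih, Finset.sum_range_succ (fun k => γ k * s k), h3, h1, h2]
      ring
  -- little-o estimate
  have hlo : (fun k => γ k * (s k - L)) =o[atTop] γ := by
    have h1 : (fun k => s k - L) =o[atTop] (fun _ : ℕ => (1:ℝ)) :=
      (Asymptotics.isLittleO_one_iff ℝ).2 (by simpa using hsL.sub (tendsto_const_nhds (x := L)))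
    have := (Asymptotics.isBigO_refl γ atTop).mul_isLittleO h1
    simpa using this
  have hsum_lo : (fun n => ∑ k ∈ Finset.range n, γ k * (s k - L)) =o[atTop]
      (fun n => ∑ k ∈ Finset.range n, γ k) :=
    hlo.sum_range (fun i => (hγ i).le) hdiv
  have hflim : Tendsto (fun n => (∑ k ∈ Finset.range n, γ k * (s k - L)) / b n)
      atTop (nhds 0) := hsum_lo.tendsto_div_nhds_zero
  have hmain : Tendsto (fun n => s n - ((∑ k ∈ Finset.range n, γ k * (s k - L)) / b n + L))
      atTop (nhds 0) := by
    have := hsL.sub (hflim.add (tendsto_const_nhds (x := L)))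
    simpa using this
  refine hmain.congr' ?_
  filter_upwards [eventually_ge_atTop 1] with n hn
  obtain ⟨m, rfl⟩ := Nat.exists_eq_add_of_le hn
  set N := 1 + m
  have hbN : 0 < b N := by
    have : N = m + 1 := by omega
    rw [this]; exact hbpos m
  have hsplit : ∑ k ∈ Finset.range N, γ k * (s k - L)
      = (∑ k ∈ Finset.range N, γ k * s k) - L * b N := by
    rw [hb]
    simp only [mul_sub]
    rw [Finset.sum_sub_distrib, ← Finset.sum_mul]
    ring
  rw [hsplit, habel N]
  rw [show (∑ k ∈ Finset.range N, γ k) = b N from rfl]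
  field_simp
  ring

open MeasureTheory in
lemma integrable_mul_of_sq {Ω : Type*} {m0 : MeasurableSpace Ω} {μ : Measure Ω}
    {f g : Ω → ℝ} (hf : AEStronglyMeasurable f μ) (hg : AEStronglyMeasurable g μ)
    (hf2 : Integrable (fun ω => f ω ^ 2) μ) (hg2 : Integrable (fun ω => g ω ^ 2) μ) :
    Integrable (fun ω => f ω * g ω) μ := by
  refine Integrable.mono' (hf2.add hg2) (hf.mul hg) (Filter.Eventually.of_forall fun ω => ?_)
  have h := sq_nonneg (|f ω| - |g ω|)
  rw [Real.norm_eq_abs, abs_mul]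
  simp only [Pi.add_apply]
  nlinarith [sq_abs (f ω), sq_abs (g ω)]

open MeasureTheory in
lemma integrable_of_sq {Ω : Type*} {m0 : MeasurableSpace Ω} {μ : Measure Ω}
    [IsProbabilityMeasure μ] {f : Ω → ℝ} (hf : AEStronglyMeasurable f μ)
    (hf2 : Integrable (fun ω => f ω ^ 2) μ) : Integrable f μ := by
  refine Integrable.mono' ((integrable_const (1:ℝ)).add hf2) hf
    (Filter.Eventually.of_forall fun ω => ?_)
  rw [Real.norm_eq_abs]
  simp only [Pi.add_apply]
  nlinarith [sq_abs (f ω), sq_nonneg (|f ω| - 1)]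


/-- **Law-of-large-numbers behaviour of the weighted noise sums.**
Let `(F_n)` be a filtration, `(M_n)_{n≥1}` an `ℝ^D`-valued martingale difference sequence,
`(X_n)` adapted with values in a compact set `C ⊆ ℝ^D`, `x ∈ C`, and `γ_n > 0` with
`Σ γ_k = ∞` and `Σ_k γ_k² E‖M_{k+1}‖_*² / (Σ_{i≤k} γ_i)² < ∞`.  Then, almost surely,
`S_n(x) / Σ_{k<n} γ_k → 0`, where `S_n(x) = Σ_{k<n} γ_k ⟨X_k − x, M_{k+1}⟩`. -/
theorem weighted_noise_sum_vanishes {D : ℕ} (nrm : NormOn D)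
    {Ω : Type*} {m0 : MeasurableSpace Ω} (μ : Measure Ω) [IsProbabilityMeasure μ]
    (F : Filtration ℕ m0)
    (M : ℕ → Ω → (Fin D → ℝ))
    (hMmeas : ∀ n, StronglyMeasurable[F (n + 1)] (M (n + 1)))
    (hMsq : ∀ n, Integrable (fun ω => (dualNorm nrm (M (n + 1) ω)) ^ 2) μ)
    (hMmean : ∀ n, μ[M (n + 1) | F n] =ᵐ[μ] 0)
    (C : Set (Fin D → ℝ)) (hCcomp : IsCompact C)
    (X : ℕ → Ω → (Fin D → ℝ))
    (hXad : ∀ n, StronglyMeasurable[F n] (X n))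
    (hXmem : ∀ n ω, X n ω ∈ C)
    (x : Fin D → ℝ) (hx : x ∈ C)
    (γ : ℕ → ℝ) (hγ : ∀ n, 0 < γ n)
    (hγdiv : Tendsto (fun n => ∑ k ∈ Finset.range n, γ k) atTop atTop)
    (hsum : Summable (fun k =>
      (γ k) ^ 2 * (∫ ω, (dualNorm nrm (M (k + 1) ω)) ^ 2 ∂μ) /
        (∑ i ∈ Finset.range (k + 1), γ i) ^ 2)) :
    ∀ᵐ ω ∂μ, Tendsto
      (fun n => (∑ k ∈ Finset.range n, γ k * stdPair (X k ω - x) (M (k + 1) ω)) /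
        (∑ k ∈ Finset.range n, γ k)) atTop (nhds 0) := by
  classical
  -- constants
  obtain ⟨c, hc0, hcle⟩ := NormOnAux.exists_dual_lower nrm
  obtain ⟨B, hB⟩ : ∃ B, ∀ v ∈ C, nrm (v - x) ≤ B := by
    have hcont : Continuous fun v : Fin D → ℝ => nrm (v - x) :=
      (NormOnAux.continuous_nrm nrm).comp (continuous_id.sub continuous_const)
    obtain ⟨B, hB⟩ := (hCcomp.image hcont).bddAbove
    exact ⟨B, fun v hv => hB ⟨v, hv, rfl⟩⟩
  have hB0 : 0 ≤ B := by
    have := hB x hx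
    rw [sub_self, NormOnAux.nrm_zero nrm] at this
    exact this
  obtain ⟨R, hR⟩ := hCcomp.isBounded.exists_norm_le
  -- notation
  set a : ℕ → ℝ := fun k => ∑ i ∈ Finset.range (k + 1), γ i with ha
  have hapos : ∀ k, 0 < a k := fun k =>
    Finset.sum_pos (fun i _ => hγ i) Finset.nonempty_range_add_one
  set Z : ℕ → Ω → ℝ := fun k ω => stdPair (X k ω - x) (M (k + 1) ω) with hZ
  set Y : ℕ → Ω → ℝ := fun k ω => (γ k / a k) * Z k ω with hY
  set f : ℕ → Ω → ℝ := fun n ω => ∑ k ∈ Finset.range n, Y k ω with hfdef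
  -- measurability
  have hZmeas : ∀ k, StronglyMeasurable[F (k + 1)] (Z k) := by
    intro k
    have hXm : StronglyMeasurable[F (k + 1)] (X k) := (hXad k).mono (F.mono (Nat.le_succ k))
    have heq : Z k = fun ω => ∑ j, (X k ω j - x j) * M (k + 1) ω j := by
      funext ω; simp [hZ, stdPair]
    rw [heq]
    apply Finset.stronglyMeasurable_fun_sum
    intro j _
    exact (((continuous_apply j).comp_stronglyMeasurable hXm).sub
      stronglyMeasurable_const).mul
      ((continuous_apply j).comp_stronglyMeasurable (hMmeas k))
  have hYmeas : ∀ k, StronglyMeasurable[F (k + 1)] (Y k) := fun k =>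
    (hZmeas k).const_mul _
  have hfmeas : ∀ n, StronglyMeasurable[F n] (f n) := by
    intro n
    apply Finset.stronglyMeasurable_fun_sum
    intro k hk
    exact (hYmeas k).mono (F.mono (Finset.mem_range.mp hk))
  -- pointwise bound
  have hZbound : ∀ k ω, |Z k ω| ≤ B * dualNorm nrm (M (k + 1) ω) := by
    intro k ω
    calc |Z k ω| ≤ nrm (X k ω - x) * dualNorm nrm (M (k + 1) ω) :=
          NormOnAux.abs_stdPair_le_dual nrm _ _
      _ ≤ B * dualNorm nrm (M (k + 1) ω) :=
          mul_le_mul_of_nonneg_right (hB _ (hXmem k ω)) (NormOnAux.dualNorm_nonneg nrm _)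
  -- integrability
  have hMint : ∀ k, Integrable (M (k + 1)) μ := by
    intro k
    refine Integrable.mono' (((integrable_const (1:ℝ)).add (hMsq k)).const_mul c)
      ((hMmeas k).mono (F.le _)).aestronglyMeasurable
      (Eventually.of_forall fun ω => ?_)
    have h1 : ‖M (k + 1) ω‖ ≤ c * dualNorm nrm (M (k + 1) ω) := hcle _
    have h2 : 0 ≤ dualNorm nrm (M (k + 1) ω) := NormOnAux.dualNorm_nonneg nrm _
    simp only [Pi.add_apply]
    nlinarith [sq_nonneg (dualNorm nrm (M (k + 1) ω) - 1)]
  have hZsq_int : ∀ k, Integrable (fun ω => Z k ω ^ 2) μ := by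
    intro k
    have hZa : AEStronglyMeasurable (Z k) μ :=
      ((hZmeas k).mono (F.le _)).aestronglyMeasurable
    refine Integrable.mono' ((hMsq k).const_mul (B ^ 2))
      ((hZa.mul hZa).congr (Eventually.of_forall fun ω => (pow_two (Z k ω)).symm))
      (Eventually.of_forall fun ω => ?_)
    have h1 := hZbound k ω
    have h2 : 0 ≤ dualNorm nrm (M (k + 1) ω) := NormOnAux.dualNorm_nonneg nrm _
    rw [Real.norm_eq_abs, abs_pow]
    have h3 := mul_self_le_mul_self (abs_nonneg (Z k ω)) h1
    nlinarith
  have hZint : ∀ k, Integrable (Z k) μ := fun k =>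
    integrable_of_sq ((hZmeas k).mono (F.le _)).aestronglyMeasurable (hZsq_int k)
  have hYint : ∀ k, Integrable (Y k) μ := fun k => (hZint k).const_mul _
  have hYsq_int : ∀ k, Integrable (fun ω => Y k ω ^ 2) μ := by
    intro k
    have heq : (fun ω => Y k ω ^ 2) = fun ω => (γ k / a k) ^ 2 * Z k ω ^ 2 := by
      funext ω; simp only [hY]; ring
    rw [heq]
    exact (hZsq_int k).const_mul _
  have hfint : ∀ n, Integrable (f n) μ := by
    intro n
    simp only [hfdef]
    exact integrable_finset_sum _ fun k _ => hYint k
  have hMjint : ∀ k (j : Fin D), Integrable (fun ω => M (k + 1) ω j) μ := fun k j =>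
    (ContinuousLinearMap.proj (R := ℝ) (φ := fun _ : Fin D => ℝ) j).integrable_comp (hMint k)
  -- conditional expectations
  have hMjcond : ∀ n (j : Fin D), μ[(fun ω => M (n + 1) ω j) | F n] =ᵐ[μ] 0 := by
    intro n j
    have h0 : (fun _ : Ω => (0:ℝ)) =ᵐ[μ] μ[(fun ω => M (n + 1) ω j) | F n] := by
      refine ae_eq_condExp_of_forall_setIntegral_eq (F.le n) (hMjint n j)
        (fun s _ _ => (integrable_const (0:ℝ)).integrableOn)
        (fun s hs hμs => ?_) stronglyMeasurable_const.aestronglyMeasurable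
      have hMs : Integrable (M (n + 1)) (μ.restrict s) := (hMint n).restrict
      have hproj : ∫ ω in s, M (n + 1) ω j ∂μ = (∫ ω in s, M (n + 1) ω ∂μ) j :=
        (ContinuousLinearMap.proj (R := ℝ) (φ := fun _ : Fin D => ℝ) j).integral_comp_comm hMs
      have hset : ∫ ω in s, M (n + 1) ω ∂μ = 0 := by
        have h1 : ∫ ω in s, (μ[M (n + 1)|F n]) ω ∂μ = ∫ ω in s, M (n + 1) ω ∂μ :=
          setIntegral_condExp (F.le n) (hMint n) hs
        have h2 : ∫ ω in s, (μ[M (n + 1)|F n]) ω ∂μ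
            = ∫ ω in s, (0 : Fin D → ℝ) ∂μ :=
          integral_congr_ae (ae_restrict_of_ae (hMmean n))
        rw [← h1, h2, integral_zero]
      rw [hproj, hset]
      simp
    exact h0.symm
  have hZcond : ∀ n, μ[Z n | F n] =ᵐ[μ] 0 := by
    intro n
    have hXb : ∀ (j : Fin D) ω, |X n ω j - x j| ≤ R + R := by
      intro j ω
      have h1 : ‖X n ω - x‖ ≤ R + R :=
        le_trans (norm_sub_le _ _) (add_le_add (hR _ (hXmem n ω)) (hR _ hx))
      calc |X n ω j - x j| = ‖(X n ω - x) j‖ := by simp [Real.norm_eq_abs]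
        _ ≤ ‖X n ω - x‖ := norm_le_pi_norm _ j
        _ ≤ R + R := h1
    have hXmeas_j : ∀ j : Fin D, StronglyMeasurable[F n] (fun ω => X n ω j - x j) :=
      fun j => ((continuous_apply j).comp_stronglyMeasurable (hXad n)).sub
        stronglyMeasurable_const
    have hterm_int : ∀ j : Fin D,
        Integrable ((fun ω => X n ω j - x j) * (fun ω => M (n + 1) ω j)) μ := by
      intro j
      exact Integrable.bdd_mul (hMjint n j)
        (((hXmeas_j j).mono (F.le n)).aestronglyMeasurable)
        (Eventually.of_forall fun ω => by simpa [Real.norm_eq_abs] using hXb j ω)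
    have hsum_eq : Z n = ∑ j : Fin D,
        (fun ω => X n ω j - x j) * (fun ω => M (n + 1) ω j) := by
      funext ω
      simp [hZ, stdPair, Finset.sum_apply]
    rw [hsum_eq]
    refine (condExp_finsetSum (fun j _ => hterm_int j) _).trans ?_
    have hjzero : ∀ j : Fin D,
        μ[(fun ω => X n ω j - x j) * (fun ω => M (n + 1) ω j)|F n] =ᵐ[μ] 0 := by
      intro j
      have hmul := condExp_mul_of_stronglyMeasurable_left (hXmeas_j j) (hterm_int j) (hMjint n j)
      refine hmul.trans ?_
      filter_upwards [hMjcond n j] with ω hω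
      simp [hω]
    have hall := ae_all_iff.mpr hjzero
    filter_upwards [hall] with ω hω
    simp only [Finset.sum_apply, Pi.zero_apply]
    exact Finset.sum_eq_zero fun j _ => hω j
  have hYcond : ∀ n, μ[Y n | F n] =ᵐ[μ] 0 := by
    intro n
    have hYeq : Y n = (γ n / a n) • Z n := by
      funext ω; simp [hY, smul_eq_mul]
    rw [hYeq]
    refine (condExp_smul (γ n / a n) (Z n) _).trans ?_
    filter_upwards [hZcond n] with ω hω
    simp only [Pi.smul_apply, Pi.zero_apply] at hω ⊢
    rw [hω, smul_zero]
  -- martingale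
  have hmart : Martingale f F μ := by
    refine martingale_nat (fun n => hfmeas n) hfint (fun n => ?_)
    have hsucc : f (n + 1) = f n + Y n := by
      funext ω
      simp [hfdef, Finset.sum_range_succ]
    rw [hsucc]
    have h1 : μ[f n + Y n|F n] =ᵐ[μ] μ[f n|F n] + μ[Y n|F n] :=
      condExp_add (hfint n) (hYint n) _
    have h2 : μ[f n|F n] = f n :=
      condExp_of_stronglyMeasurable (F.le n) (hfmeas n) (hfint n)
    refine EventuallyEq.symm (h1.trans ?_)
    filter_upwards [hYcond n] with ω hω
    simp only [Pi.add_apply, Pi.zero_apply] at hω ⊢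
    rw [h2, hω, add_zero]
  -- second moments
  have hmoment : ∀ n, Integrable (fun ω => f n ω ^ 2) μ ∧
      ∫ ω, f n ω ^ 2 ∂μ ≤ ∑ k ∈ Finset.range n, ∫ ω, Y k ω ^ 2 ∂μ := by
    intro n
    induction n with
    | zero =>
      constructor
      · simp only [hfdef, Finset.range_zero, Finset.sum_empty]
        simpa using integrable_const (0:ℝ)
      · simp [hfdef]
    | succ n ih =>
      obtain ⟨ihint, ihle⟩ := ih
      have hfa : AEStronglyMeasurable (f n) μ :=
        ((hfmeas n).mono (F.le n)).aestronglyMeasurable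
      have hYa : AEStronglyMeasurable (Y n) μ :=
        ((hYmeas n).mono (F.le (n + 1))).aestronglyMeasurable
      have hprod : Integrable (fun ω => f n ω * Y n ω) μ :=
        integrable_mul_of_sq hfa hYa ihint (hYsq_int n)
      have hprod' : Integrable (f n * Y n) μ := hprod
      have hcross : ∫ ω, f n ω * Y n ω ∂μ = 0 := by
        have h1 : ∫ ω, (μ[f n * Y n|F n]) ω ∂μ = ∫ ω, (f n * Y n) ω ∂μ :=
          integral_condExp (F.le n)
        have h2 : μ[f n * Y n|F n] =ᵐ[μ] f n * μ[Y n|F n] :=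
          condExp_mul_of_stronglyMeasurable_left (hfmeas n) hprod' (hYint n)
        have h3 : (f n * μ[Y n|F n] : Ω → ℝ) =ᵐ[μ] 0 := by
          filter_upwards [hYcond n] with ω hω
          simp only [Pi.mul_apply, Pi.zero_apply] at hω ⊢
          rw [hω, mul_zero]
        calc ∫ ω, f n ω * Y n ω ∂μ = ∫ ω, (μ[f n * Y n|F n]) ω ∂μ := h1.symm
          _ = ∫ ω, (0 : Ω → ℝ) ω ∂μ := integral_congr_ae (h2.trans h3)
          _ = 0 := by simp
      have hexp : (fun ω => f (n + 1) ω ^ 2)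
          = fun ω => f n ω ^ 2 + (2 * (f n ω * Y n ω) + Y n ω ^ 2) := by
        funext ω
        have hfs : f (n + 1) ω = f n ω + Y n ω := by
          simp [hfdef, Finset.sum_range_succ]
        rw [hfs]; ring
      have hint2 : Integrable (fun ω => 2 * (f n ω * Y n ω) + Y n ω ^ 2) μ :=
        (hprod.const_mul 2).add (hYsq_int n)
      constructor
      · rw [hexp]
        exact ihint.add hint2
      · rw [hexp]
        rw [integral_add ihint hint2,
          integral_add (hprod.const_mul 2) (hYsq_int n),
          integral_const_mul, hcross, mul_zero, zero_add,
          Finset.sum_range_succ]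
        linarith
  -- moment bounds
  have hIdual_nonneg : ∀ k, 0 ≤ ∫ ω, dualNorm nrm (M (k + 1) ω) ^ 2 ∂μ := fun k =>
    integral_nonneg fun ω => sq_nonneg _
  set t : ℕ → ℝ := fun k =>
    (γ k) ^ 2 * (∫ ω, (dualNorm nrm (M (k + 1) ω)) ^ 2 ∂μ) / (a k) ^ 2 with ht
  have htnonneg : ∀ k, 0 ≤ t k := fun k =>
    div_nonneg (mul_nonneg (sq_nonneg _) (hIdual_nonneg k)) (sq_nonneg _)
  have hsum' : Summable t := hsum
  set T : ℝ := ∑' k, t k with hT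
  have hYsq_le : ∀ k, ∫ ω, Y k ω ^ 2 ∂μ ≤ B ^ 2 * t k := by
    intro k
    have h1 : (fun ω => Y k ω ^ 2) = fun ω => (γ k / a k) ^ 2 * Z k ω ^ 2 := by
      funext ω; simp only [hY]; ring
    have h2 : ∫ ω, Z k ω ^ 2 ∂μ ≤ B ^ 2 * ∫ ω, dualNorm nrm (M (k + 1) ω) ^ 2 ∂μ := by
      rw [← integral_const_mul]
      refine integral_mono (hZsq_int k) ((hMsq k).const_mul _) fun ω => ?_
      have hb := hZbound k ω
      have h2 : 0 ≤ dualNorm nrm (M (k + 1) ω) := NormOnAux.dualNorm_nonneg nrm _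
      nlinarith [sq_abs (Z k ω), abs_nonneg (Z k ω)]
    rw [h1, integral_const_mul]
    calc (γ k / a k) ^ 2 * ∫ ω, Z k ω ^ 2 ∂μ
        ≤ (γ k / a k) ^ 2 * (B ^ 2 * ∫ ω, dualNorm nrm (M (k + 1) ω) ^ 2 ∂μ) :=
          mul_le_mul_of_nonneg_left h2 (sq_nonneg _)
      _ = B ^ 2 * t k := by
          rw [ht]
          have := (hapos k).ne'
          field_simp
  have hfsq_le : ∀ n, ∫ ω, f n ω ^ 2 ∂μ ≤ B ^ 2 * T := by
    intro n
    calc ∫ ω, f n ω ^ 2 ∂μ ≤ ∑ k ∈ Finset.range n, ∫ ω, Y k ω ^ 2 ∂μ := (hmoment n).2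
      _ ≤ ∑ k ∈ Finset.range n, B ^ 2 * t k := Finset.sum_le_sum fun k _ => hYsq_le k
      _ = B ^ 2 * ∑ k ∈ Finset.range n, t k := by rw [← Finset.mul_sum]
      _ ≤ B ^ 2 * T := by
          refine mul_le_mul_of_nonneg_left ?_ (sq_nonneg B)
          exact Summable.sum_le_tsum _ (fun k _ => htnonneg k) hsum'
  -- L¹ bound
  set Rb : ℝ := Real.sqrt (B ^ 2 * T) with hRb
  have hbdd : ∀ n, eLpNorm (f n) 1 μ ≤ (Rb.toNNReal : ℝ≥0∞) := by
    intro n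
    have hfa : AEStronglyMeasurable (f n) μ :=
      ((hfmeas n).mono (F.le n)).aestronglyMeasurable
    have hmem2 : MemLp (f n) 2 μ := (memLp_two_iff_integrable_sq hfa).mpr (hmoment n).1
    have h2 : eLpNorm (f n) 2 μ
        = ENNReal.ofReal ((∫ ω, ‖f n ω‖ ^ (2:ℝ≥0∞).toReal ∂μ) ^ ((2:ℝ≥0∞).toReal)⁻¹) :=
      hmem2.eLpNorm_eq_integral_rpow_norm two_ne_zero ENNReal.ofNat_ne_top
    have htoReal : (2:ℝ≥0∞).toReal = (2:ℝ) := by simp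
    have hint_eq : ∫ ω, ‖f n ω‖ ^ (2:ℝ≥0∞).toReal ∂μ = ∫ ω, f n ω ^ 2 ∂μ := by
      refine integral_congr_ae (Eventually.of_forall fun ω => ?_)
      have h2' : (2:ℝ≥0∞).toReal = ((2:ℕ):ℝ) := by simp
      simp only [h2', Real.rpow_natCast, Real.norm_eq_abs, sq_abs]
    have hle : (∫ ω, f n ω ^ 2 ∂μ) ^ ((2:ℝ≥0∞).toReal)⁻¹ ≤ Rb := by
      rw [htoReal, hRb, show ((2:ℝ))⁻¹ = (1/2 : ℝ) by norm_num, Real.sqrt_eq_rpow]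
      exact Real.rpow_le_rpow (integral_nonneg fun ω => sq_nonneg _) (hfsq_le n) (by norm_num)
    calc eLpNorm (f n) 1 μ ≤ eLpNorm (f n) 2 μ :=
          eLpNorm_le_eLpNorm_of_exponent_le (by norm_num) hfa
      _ = ENNReal.ofReal ((∫ ω, f n ω ^ 2 ∂μ) ^ ((2:ℝ≥0∞).toReal)⁻¹) := by
          rw [h2, hint_eq]
      _ ≤ ENNReal.ofReal Rb := ENNReal.ofReal_le_ofReal hle
      _ = (Rb.toNNReal : ℝ≥0∞) := rfl
  -- convergence
  have hconv := hmart.submartingale.exists_ae_tendsto_of_bdd hbdd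
  filter_upwards [hconv] with ω hω
  obtain ⟨L, hL⟩ := hω
  have hL' : Tendsto (fun n => ∑ k ∈ Finset.range n,
      γ k * Z k ω / (∑ i ∈ Finset.range (k + 1), γ i)) atTop (nhds L) := by
    refine hL.congr fun n => ?_
    simp only [hfdef]
    refine Finset.sum_congr rfl fun k _ => ?_
    simp only [hY, ha]
    rw [div_mul_eq_mul_div]
  exact kronecker_aux hγ hγdiv hL'
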